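/- Let $(\Omega, \mathcal{F}, \mathbb{P})$ be a probability space and let $X = (X_{s,t})_{(s,t) \in \mathbb{R}_+^2}$ be a two-parameter process with independent planar increments: for disjoint rectangles the rectangular increments $\Delta X_{(s,t],(s',t']} := X_{s',t'} - X_{s,t'} - X_{s',t} + X_{s,t}$ are independent, and each rectangular increment over a region disjoint from $[0,s'] \times [0,t'] \setminus ((s,s'] \times (t,t'])$-history is independent of the sigma-field generated by $X$ on $\{(u,v): u \le s \text{ or } v \le t\}$. Then $X$ satisfies the $\ast$-Markov property: for all $s,t \ge 0$ and $h,k > 0$ and any bounded measurable $f$, $\mathbb{E}[f(X_{s+h,t+k}) \mid \mathcal{G}^*_{s,t}] = \mathbb{E}[f(X_{s+h,t+k}) \mid X_{s,t}, X_{s+h,t}, X_{s,t+k}]$ a.s., where $\mathcal{G}^*_{s,t} = \sigma(X_{u,v} : u \le s \text{ or } v \le t, \text{ restricted appropriately to } u \le s+h, v \le t+k)$. -/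

import Mathlib

open MeasureTheory ProbabilityTheory

/-- If `D` is independent of `m` and `g` is `m`-measurable, then
`E[f (D + g) | m] = φ ∘ g` where `φ y = E[f (D + y)]`. -/
lemma condexp_add_indep_of_bounded
    {Ω : Type*} {m : MeasurableSpace Ω} [m0 : MeasurableSpace Ω] (μ : Measure Ω)
    [IsProbabilityMeasure μ] (hm : m ≤ m0)
    {D g : Ω → ℝ} (hD : Measurable[m0] D) (hg : Measurable[m] g)
    (hindep : Indep (MeasurableSpace.comap D inferInstance) m μ)
    {f : ℝ → ℝ} (hf : Measurable f) {C : ℝ} (hC : ∀ x, |f x| ≤ C) :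
    μ[fun ω => f (D ω + g ω) | m] =ᵐ[μ] fun ω => ∫ ω', f (D ω' + g ω) ∂μ := by
  have hC0 : 0 ≤ C := le_trans (abs_nonneg _) (hC 0)
  have hg0 : Measurable[m0] g := hg.mono hm le_rfl
  haveI : IsProbabilityMeasure (μ.map D) := Measure.isProbabilityMeasure_map hD.aemeasurable
  set φ : ℝ → ℝ := fun y => ∫ ω', f (D ω' + y) ∂μ with hφdef
  have hφmap : ∀ y, φ y = ∫ x, f (x + y) ∂(μ.map D) := fun y =>
    (integral_map hD.aemeasurable
      ((hf.comp (measurable_add_const y)).aestronglyMeasurable)).symm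
  have hφsm : StronglyMeasurable φ := by
    have h2 : StronglyMeasurable fun p : ℝ × ℝ => f (p.2 + p.1) :=
      (hf.comp (measurable_snd.add measurable_fst)).stronglyMeasurable
    have := h2.integral_prod_right' (ν := μ.map D)
    simpa [← hφmap] using this
  have hφb : ∀ y, |φ y| ≤ C := by
    intro y
    rw [← Real.norm_eq_abs]
    calc ‖φ y‖ ≤ C * (μ Set.univ).toReal :=
          norm_integral_le_of_norm_le_const (ae_of_all _ fun ω' => by
            simpa [Real.norm_eq_abs] using hC (D ω' + y))
      _ = C := by simp
  have hmeasDg : Measurable[m0] fun ω => f (D ω + g ω) := hf.comp (hD.add hg0)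
  have hint : Integrable (fun ω => f (D ω + g ω)) μ :=
    (integrable_const C).mono' hmeasDg.aestronglyMeasurable
      (ae_of_all _ fun ω => by simpa [Real.norm_eq_abs] using hC (D ω + g ω))
  have hφgm : Measurable[m] fun ω => φ (g ω) := hφsm.measurable.comp hg
  have hφgint : Integrable (fun ω => φ (g ω)) μ :=
    (integrable_const C).mono' (hφgm.mono hm le_rfl).aestronglyMeasurable
      (ae_of_all _ fun ω => by simpa [Real.norm_eq_abs] using hφb (g ω))
  refine (ae_eq_condExp_of_forall_setIntegral_eq hm hint
    (fun s _ _ => hφgint.integrableOn) (fun s hs _ => ?_)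
    ((hφsm.comp_measurable hg).aestronglyMeasurable)).symm
  -- key set-integral identity via independence
  set W : Ω → ℝ × ℝ := fun ω => (g ω, s.indicator (fun _ => (1 : ℝ)) ω) with hWdef
  have hWm : Measurable[m] W := hg.prodMk (measurable_const.indicator hs)
  have hW : Measurable[m0] W := hWm.mono hm le_rfl
  haveI : IsProbabilityMeasure (μ.map W) := Measure.isProbabilityMeasure_map hW.aemeasurable
  have hIF : IndepFun D W μ := indep_of_indep_of_le_right hindep hWm.comap_le
  have hmap : μ.map (fun ω => (D ω, W ω)) = (μ.map D).prod (μ.map W) :=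
    (indepFun_iff_map_prod_eq_prod_map_map hD.aemeasurable hW.aemeasurable).mp hIF
  set H : ℝ × (ℝ × ℝ) → ℝ := fun p => if p.2.2 = 1 then f (p.1 + p.2.1) else 0 with hHdef
  have hHm : Measurable H := by
    refine Measurable.ite ?_ (hf.comp (measurable_fst.add (measurable_fst.comp measurable_snd)))
      measurable_const
    exact (measurable_snd.comp measurable_snd) (measurableSet_singleton (1 : ℝ))
  have hHb : ∀ p, |H p| ≤ C := by
    intro p
    by_cases hp : p.2.2 = 1 <;> simp [H, hp, hC, hC0]
  have hHint : Integrable H ((μ.map D).prod (μ.map W)) :=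
    (integrable_const C).mono' hHm.aestronglyMeasurable
      (ae_of_all _ fun p => by simpa [Real.norm_eq_abs] using hHb p)
  have hφfst : Measurable fun y : ℝ × ℝ => if y.2 = 1 then φ y.1 else 0 := by
    refine Measurable.ite ?_ (hφsm.measurable.comp measurable_fst) measurable_const
    exact measurable_snd (measurableSet_singleton (1 : ℝ))
  calc ∫ x in s, φ (g x) ∂μ
      = ∫ ω, (if (W ω).2 = 1 then φ ((W ω).1) else 0) ∂μ := by
        rw [← integral_indicator (hm _ hs)]
        refine integral_congr_ae (ae_of_all _ fun ω => ?_)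
        by_cases hω : ω ∈ s <;> simp [W, Set.indicator_of_mem, Set.indicator_of_notMem, hω]
    _ = ∫ y, (if y.2 = 1 then φ y.1 else 0) ∂(μ.map W) :=
        (integral_map hW.aemeasurable hφfst.aestronglyMeasurable).symm
    _ = ∫ y, ∫ x, H (x, y) ∂(μ.map D) ∂(μ.map W) := by
        refine integral_congr_ae (ae_of_all _ fun y => ?_)
        by_cases hy : y.2 = 1
        · simp only [H, hy, if_true]
          rw [hφmap y.1]
        · simp [H, hy]
    _ = ∫ p, H p ∂((μ.map D).prod (μ.map W)) := (integral_prod_symm H hHint).symm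
    _ = ∫ p, H p ∂(μ.map (fun ω => (D ω, W ω))) := by rw [hmap]
    _ = ∫ ω, H (D ω, W ω) ∂μ :=
        integral_map (hD.prodMk hW).aemeasurable hHm.aestronglyMeasurable
    _ = ∫ x in s, f (D x + g x) ∂μ := by
        rw [← integral_indicator (hm _ hs)]
        refine integral_congr_ae (ae_of_all _ fun ω => ?_)
        by_cases hω : ω ∈ s <;>
          simp [H, W, Set.indicator_of_mem, Set.indicator_of_notMem, hω]


/-- A two-parameter process with independent planar increments satisfies the
`∗`-Markov property: for `s,t ≥ 0`, `h,k > 0` and bounded measurable `f`,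
`𝔼[f(X_{s+h,t+k}) | 𝒢*_{s,t}] = 𝔼[f(X_{s+h,t+k}) | X_{s,t}, X_{s+h,t}, X_{s,t+k}]` a.s.,
where `𝒢*_{s,t} = σ(X_{u,v} : u ≤ s ∨ v ≤ t)`. -/
theorem starMarkov_of_indep_increments
    {Ω : Type*} {m0 : MeasurableSpace Ω} (μ : Measure Ω) [IsProbabilityMeasure μ]
    (X : ℝ × ℝ → Ω → ℝ) (hXmeas : ∀ p, Measurable (X p))
    -- strong history σ-field 𝒢*_{s,t}
    (G : ℝ → ℝ → MeasurableSpace Ω)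
    (hG : ∀ s t, G s t =
      ⨆ (p : ℝ × ℝ) (_ : p.1 ≤ s ∨ p.2 ≤ t), MeasurableSpace.comap (X p) inferInstance)
    -- independent increments: the rectangular increment over `(s,s+h] × (t,t+k]`
    -- is independent of the strong history 𝒢*_{s,t}
    (hindep : ∀ s t h k : ℝ, 0 ≤ s → 0 ≤ t → 0 < h → 0 < k →
      Indep (MeasurableSpace.comap
          (fun ω => X (s + h, t + k) ω - X (s + h, t) ω - X (s, t + k) ω + X (s, t) ω)
          inferInstance)
        (G s t) μ) :
    ∀ s t h k : ℝ, 0 ≤ s → 0 ≤ t → 0 < h → 0 < k →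
      ∀ f : ℝ → ℝ, Measurable f → (∃ C, ∀ x, |f x| ≤ C) →
        μ[fun ω => f (X (s + h, t + k) ω) | G s t] =ᵐ[μ]
          μ[fun ω => f (X (s + h, t + k) ω) |
            MeasurableSpace.comap
              (fun ω => (X (s, t) ω, X (s + h, t) ω, X (s, t + k) ω)) inferInstance] := by
  intro s t h k hs ht hh hk f hf hfb
  obtain ⟨C, hC⟩ := hfb
  set D : Ω → ℝ := fun ω => X (s + h, t + k) ω - X (s + h, t) ω - X (s, t + k) ω + X (s, t) ω
    with hDdef
  set g : Ω → ℝ := fun ω => X (s + h, t) ω + X (s, t + k) ω - X (s, t) ω with hgdef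
  have hDg : (fun ω => f (X (s + h, t + k) ω)) = fun ω => f (D ω + g ω) := by
    funext ω
    congr 1
    simp only [D, g]
    ring
  have hGle : G s t ≤ m0 := by
    rw [hG]
    exact iSup_le fun p => iSup_le fun _ => (hXmeas p).comap_le
  have hXG : ∀ p : ℝ × ℝ, p.1 ≤ s ∨ p.2 ≤ t → Measurable[G s t] (X p) := by
    intro p hp
    refine Measurable.of_comap_le ?_
    rw [hG]
    exact le_iSup₂ (f := fun (p : ℝ × ℝ) (_ : p.1 ≤ s ∨ p.2 ≤ t) =>
      MeasurableSpace.comap (X p) inferInstance) p hp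
  set mY : MeasurableSpace Ω := MeasurableSpace.comap
    (fun ω => (X (s, t) ω, X (s + h, t) ω, X (s, t + k) ω)) inferInstance with hmYdef
  have hYm : Measurable[mY] fun ω => (X (s, t) ω, X (s + h, t) ω, X (s, t + k) ω) :=
    Measurable.of_comap_le le_rfl
  have hgY : Measurable[mY] g := (hYm.snd.fst.add hYm.snd.snd).sub hYm.fst
  have hYG : mY ≤ G s t := by
    refine Measurable.comap_le ?_
    exact (hXG (s, t) (Or.inl le_rfl)).prodMk
      (((hXG (s + h, t) (Or.inr le_rfl))).prodMk (hXG (s, t + k) (Or.inl le_rfl)))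
  have hgG : Measurable[G s t] g := hgY.mono hYG le_rfl
  have hD : Measurable[m0] D :=
    (((hXmeas _).sub (hXmeas _)).sub (hXmeas _)).add (hXmeas _)
  have h1 := condexp_add_indep_of_bounded (m0 := m0) μ hGle hD hgG (hindep s t h k hs ht hh hk) hf hC
  have h2 := condexp_add_indep_of_bounded (m0 := m0) μ (hYG.trans hGle) hD hgY
    (indep_of_indep_of_le_right (hindep s t h k hs ht hh hk) hYG) hf hC
  rw [hDg]
  exact h1.trans h2.symm
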